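/- arXiv:1909.07236 — 2 statements merged into one kernel-verified Lean document; each statement's English description precedes it below -/
import Mathlib

section
/- Let X be a Banach space and F : ℝ → X a Bochner integrable function with ∫_ℝ F = 0 and |F(x)|_X ≤ Λ⟨R(x−x₀)⟩^{−100} for all x (Λ, R > 0, x₀ ∈ ℝ). Define Φ(x) = ∫_{−∞}^x F(t)dt. Then Φ vanishes at ±∞ and satisfies |Φ(x)|_X ≤ C Λ R^{−1} ⟨R(x−x₀)⟩^{−99} for all x ∈ ℝ, with an absolute constant C. -/
open MeasureTheory Filter

section AuxStmt15

open Set Real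

private lemma aux_trans_Ioi15 (g : ℝ → ℝ) (a d : ℝ) :
    ∫ x in Set.Ioi a, g (x - d) = ∫ x in Set.Ioi (a - d), g x := by
  rw [← integral_indicator measurableSet_Ioi, ← integral_indicator measurableSet_Ioi]
  have h : (Set.Ioi a).indicator (fun x => g (x - d)) =
      fun x => (Set.Ioi (a - d)).indicator g (x - d) := by
    funext x
    simp only [Set.indicator_apply, Set.mem_Ioi, sub_lt_sub_iff_right]
  rw [h, integral_sub_right_eq_self ((Set.Ioi (a-d)).indicator g) d]

private lemma int_gen15 (β : ℝ) (hβ : 1 ≤ β) :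
    Integrable (fun u : ℝ => ((β + u^2)^(50:ℕ))⁻¹) := by
  apply integrable_inv_one_add_sq.mono'
  · have hc : Continuous fun u : ℝ => ((β + u^2)^(50:ℕ)) := by continuity
    exact (hc.inv₀ (fun x => by positivity)).aestronglyMeasurable
  · filter_upwards with u
    rw [Real.norm_eq_abs, abs_of_nonneg (by positivity)]
    apply inv_anti₀ (by positivity)
    calc (1:ℝ) + u^2 ≤ β + u^2 := by linarith
      _ ≤ (β + u^2)^(50:ℕ) := le_self_pow₀ (by nlinarith) (by norm_num)

private lemma int_h15 : Integrable (fun u : ℝ => (((1:ℝ) + u^2)^(50:ℕ))⁻¹) :=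
  int_gen15 1 le_rfl

set_option maxRecDepth 10000 in
private lemma keyIoi15 (c : ℝ) (hc : 0 ≤ c) :
    ∫ u in Set.Ioi c, (((1:ℝ)+u^2)^(50:ℕ))⁻¹ ≤ π * ((Real.sqrt (1+c^2))^(99:ℕ))⁻¹ := by
  set b := Real.sqrt (1+c^2) with hbdef
  have hb2 : b^2 = 1 + c^2 := Real.sq_sqrt (by positivity)
  have hb1 : 1 ≤ b := by
    nlinarith [Real.sqrt_nonneg (1+c^2), hb2]
  have hb0 : (0:ℝ) < b := lt_of_lt_of_le one_pos hb1
  have intb : Integrable (fun u : ℝ => ((b^2 + (u-c)^2)^(50:ℕ))⁻¹) := by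
    have := (int_gen15 (b^2) (by nlinarith)).comp_sub_right c
    simpa using this
  have step1 : ∫ u in Set.Ioi c, (((1:ℝ)+u^2)^(50:ℕ))⁻¹
      ≤ ∫ u in Set.Ioi c, ((b^2+(u-c)^2)^(50:ℕ))⁻¹ := by
    apply setIntegral_mono_on int_h15.integrableOn intb.integrableOn measurableSet_Ioi
    intro u hu
    have hu' : c < u := hu
    apply inv_anti₀ (by positivity)
    apply pow_le_pow_left₀ (by positivity)
    nlinarith
  have step2 : ∫ u in Set.Ioi c, ((b^2+(u-c)^2)^(50:ℕ))⁻¹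
      = ∫ s in Set.Ioi (0:ℝ), ((b^2+s^2)^(50:ℕ))⁻¹ := by
    have := aux_trans_Ioi15 (fun s => ((b^2+s^2)^(50:ℕ))⁻¹) c c
    simpa using this
  have step3 : ∫ s in Set.Ioi (0:ℝ), ((b^2+s^2)^(50:ℕ))⁻¹
      = b * ((b^(100:ℕ))⁻¹ * ∫ t in Set.Ioi (0:ℝ), (((1:ℝ)+t^2)^(50:ℕ))⁻¹) := by
    have h := integral_comp_mul_left_Ioi
      (fun t => ((b^2 * (1+t^2))^(50:ℕ))⁻¹) 0 (inv_pos.mpr hb0)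
    have e1 : (fun x : ℝ => ((b^2 * (1+(b⁻¹*x)^2))^(50:ℕ))⁻¹)
        = fun x : ℝ => ((b^2+x^2)^(50:ℕ))⁻¹ := by
      funext x
      have : b^2 * (1+(b⁻¹*x)^2) = b^2 + x^2 := by
        field_simp
      rw [this]
    rw [e1] at h
    simp only [mul_zero, inv_inv, smul_eq_mul] at h
    rw [h]
    congr 1
    have e2 : (fun t : ℝ => ((b^2 * (1+t^2))^(50:ℕ))⁻¹)
        = fun t : ℝ => (b^(100:ℕ))⁻¹ * (((1:ℝ)+t^2)^(50:ℕ))⁻¹ := by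
      funext t
      rw [mul_pow, mul_inv, show b^(100:ℕ) = (b^2)^(50:ℕ) by ring]
    rw [e2, MeasureTheory.integral_const_mul]
  have step4 : ∫ t in Set.Ioi (0:ℝ), (((1:ℝ)+t^2)^(50:ℕ))⁻¹ ≤ π := by
    calc ∫ t in Set.Ioi (0:ℝ), (((1:ℝ)+t^2)^(50:ℕ))⁻¹
        ≤ ∫ t in Set.Ioi (0:ℝ), ((1:ℝ)+t^2)⁻¹ := by
          apply setIntegral_mono_on int_h15.integrableOn
            integrable_inv_one_add_sq.integrableOn measurableSet_Ioi
          intro t _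
          apply inv_anti₀ (by positivity)
          exact le_self_pow₀ (by nlinarith) (by norm_num)
      _ ≤ ∫ t : ℝ, ((1:ℝ)+t^2)⁻¹ :=
          setIntegral_le_integral integrable_inv_one_add_sq
            (Filter.Eventually.of_forall fun t => by positivity)
      _ = π := integral_univ_inv_one_add_sq
  calc ∫ u in Set.Ioi c, (((1:ℝ)+u^2)^(50:ℕ))⁻¹
      ≤ b * ((b^(100:ℕ))⁻¹ * ∫ t in Set.Ioi (0:ℝ), (((1:ℝ)+t^2)^(50:ℕ))⁻¹) := by
        rw [← step3, ← step2]; exact step1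
    _ ≤ b * ((b^(100:ℕ))⁻¹ * π) := by gcongr
    _ = π * ((b^(99:ℕ))⁻¹) := by
        rw [show b^(100:ℕ) = b^(99:ℕ) * b by ring]
        field_simp

set_option maxRecDepth 10000 in
private lemma mainIoi15 {X : Type} [NormedAddCommGroup X] [NormedSpace ℝ X]
    (F : ℝ → X) (Λ R x₀ : ℝ) (hΛ : 0 < Λ) (hR : 0 < R)
    (hF : Integrable F volume)
    (hb : ∀ t : ℝ, ‖F t‖ ≤ Λ * (((1:ℝ)+(R*(t-x₀))^2)^(50:ℕ))⁻¹)
    (x : ℝ) (hx : x₀ ≤ x) :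
    ‖∫ t in Set.Ioi x, F t‖ ≤
      π * Λ * R⁻¹ * ((Real.sqrt (1+(R*(x-x₀))^2))^(99:ℕ))⁻¹ := by
  have hGint : Integrable (fun t : ℝ => Λ * (((1:ℝ)+(R*(t-x₀))^2)^(50:ℕ))⁻¹) := by
    have h1 := (int_h15.comp_sub_right (R*x₀)).comp_mul_left' hR.ne'
    have e : (fun t : ℝ => (((1:ℝ)+(R*t - R*x₀)^2)^(50:ℕ))⁻¹)
        = fun t : ℝ => (((1:ℝ)+(R*(t-x₀))^2)^(50:ℕ))⁻¹ := by
      funext t; rw [mul_sub]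
    exact ((e ▸ h1).const_mul Λ)
  have subst : ∫ t in Set.Ioi x, (((1:ℝ)+(R*(t-x₀))^2)^(50:ℕ))⁻¹
      = R⁻¹ * ∫ u in Set.Ioi (R*(x-x₀)), (((1:ℝ)+u^2)^(50:ℕ))⁻¹ := by
    have h := integral_comp_mul_left_Ioi
      (fun s => (((1:ℝ)+(s - R*x₀)^2)^(50:ℕ))⁻¹) x hR
    have e : (fun t : ℝ => (((1:ℝ)+(R*t - R*x₀)^2)^(50:ℕ))⁻¹)
        = fun t : ℝ => (((1:ℝ)+(R*(t-x₀))^2)^(50:ℕ))⁻¹ := by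
      funext t; rw [mul_sub]
    rw [e] at h
    rw [h, smul_eq_mul]
    congr 1
    have h2 := aux_trans_Ioi15 (fun u => (((1:ℝ)+u^2)^(50:ℕ))⁻¹) (R*x) (R*x₀)
    rw [h2, show R*x - R*x₀ = R*(x-x₀) by ring]
  calc ‖∫ t in Set.Ioi x, F t‖ ≤ ∫ t in Set.Ioi x, ‖F t‖ :=
        norm_integral_le_integral_norm _
    _ ≤ ∫ t in Set.Ioi x, Λ * (((1:ℝ)+(R*(t-x₀))^2)^(50:ℕ))⁻¹ :=
        setIntegral_mono_on hF.norm.integrableOn hGint.integrableOn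
          measurableSet_Ioi (fun t _ => hb t)
    _ = Λ * ∫ t in Set.Ioi x, (((1:ℝ)+(R*(t-x₀))^2)^(50:ℕ))⁻¹ :=
        MeasureTheory.integral_const_mul _ _
    _ = Λ * (R⁻¹ * ∫ u in Set.Ioi (R*(x-x₀)), (((1:ℝ)+u^2)^(50:ℕ))⁻¹) := by rw [subst]
    _ ≤ Λ * (R⁻¹ * (π * ((Real.sqrt (1+(R*(x-x₀))^2))^(99:ℕ))⁻¹)) := by
        gcongr
        exact keyIoi15 _ (mul_nonneg hR.le (sub_nonneg.mpr hx))
    _ = π * Λ * R⁻¹ * ((Real.sqrt (1+(R*(x-x₀))^2))^(99:ℕ))⁻¹ := by ring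

set_option maxRecDepth 10000 in
private lemma conv10015 (y : ℝ) :
    (Real.sqrt (1+y^2)) ^ (-(100:ℝ)) = (((1:ℝ)+y^2)^(50:ℕ))⁻¹ := by
  have h : (0:ℝ) ≤ 1+y^2 := by positivity
  rw [show (-(100:ℝ)) = -((100:ℕ):ℝ) by norm_num,
    Real.rpow_neg (Real.sqrt_nonneg _), Real.rpow_natCast]
  congr 1
  rw [show (100:ℕ) = 2*50 by norm_num, pow_mul, Real.sq_sqrt h]

private lemma conv9915 (y : ℝ) :
    (Real.sqrt (1+y^2)) ^ (-(99:ℝ)) = ((Real.sqrt (1+y^2))^(99:ℕ))⁻¹ := by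
  rw [show (-(99:ℝ)) = -((99:ℕ):ℝ) by norm_num,
    Real.rpow_neg (Real.sqrt_nonneg _), Real.rpow_natCast]

end AuxStmt15

open Real in
/-- Decay of the antiderivative of a mean-zero function with scale-`R⁻¹` decay. -/
theorem stmt15 :
    ∃ C : ℝ, 0 < C ∧
    ∀ (X : Type) [NormedAddCommGroup X] [NormedSpace ℝ X] [CompleteSpace X],
    ∀ (F : ℝ → X) (Λ R x₀ : ℝ), 0 < Λ → 0 < R →
      Integrable F volume → (∫ x : ℝ, F x) = 0 →
      (∀ x : ℝ, ‖F x‖ ≤ Λ * (Real.sqrt (1 + (R * (x - x₀)) ^ 2)) ^ (-(100 : ℝ))) →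
      Tendsto (fun x : ℝ => ∫ t in Set.Iic x, F t) atBot (nhds 0) ∧
      Tendsto (fun x : ℝ => ∫ t in Set.Iic x, F t) atTop (nhds 0) ∧
      ∀ x : ℝ, ‖∫ t in Set.Iic x, F t‖ ≤
        C * Λ * R⁻¹ * (Real.sqrt (1 + (R * (x - x₀)) ^ 2)) ^ (-(99 : ℝ)) := by
  refine ⟨π, Real.pi_pos, ?_⟩
  intro X _ _ _ F Λ R x₀ hΛ hR hF hmean hbound
  have hbound' : ∀ t : ℝ, ‖F t‖ ≤ Λ * (((1:ℝ)+(R*(t-x₀))^2)^(50:ℕ))⁻¹ := by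
    intro t
    have := hbound t
    rwa [conv10015] at this
  have key : ∀ x : ℝ, ‖∫ t in Set.Iic x, F t‖ ≤
      π * Λ * R⁻¹ * ((Real.sqrt (1+(R*(x-x₀))^2))^(99:ℕ))⁻¹ := by
    intro x
    rcases le_total x₀ x with hx | hx
    · have hsplit := integral_add_compl (measurableSet_Iic (a := x)) hF
      rw [Set.compl_Iic, hmean] at hsplit
      have h0 : ∫ t in Set.Iic x, F t = - ∫ t in Set.Ioi x, F t := by
        linear_combination (norm := abel) hsplit
      rw [h0, norm_neg]
      exact mainIoi15 F Λ R x₀ hΛ hR hF hbound' x hx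
    · set G : ℝ → X := fun u => F (-u) with hG
      have hGint : Integrable G volume := hF.comp_neg
      have hGb : ∀ t : ℝ, ‖G t‖ ≤ Λ * (((1:ℝ)+(R*(t-(-x₀)))^2)^(50:ℕ))⁻¹ := by
        intro t
        have := hbound' (-t)
        simpa [hG, show R*(-t-x₀) = -(R*(t-(-x₀))) by ring, neg_sq] using this
      have hrefl : ∫ t in Set.Iic x, F t = ∫ u in Set.Ioi (-x), G u := by
        rw [← integral_comp_neg_Iic x G]
        simp [hG]
      rw [hrefl]
      have h := mainIoi15 G Λ R (-x₀) hΛ hR hGint hGb (-x) (by linarith)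
      have e : R*(-x-(-x₀)) = -(R*(x-x₀)) := by ring
      rwa [e, neg_sq] at h
  have keyC : ∀ x : ℝ, ‖∫ t in Set.Iic x, F t‖ ≤
      π * Λ * R⁻¹ * (Real.sqrt (1 + (R * (x - x₀)) ^ 2)) ^ (-(99:ℝ)) := by
    intro x
    rw [conv9915]
    exact key x
  have hpow : ∀ x : ℝ, |R*(x-x₀)| ≤ (Real.sqrt (1+(R*(x-x₀))^2))^(99:ℕ) := by
    intro x
    have h1 : |R*(x-x₀)| ≤ Real.sqrt (1+(R*(x-x₀))^2) := by
      rw [← Real.sqrt_sq_eq_abs]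
      exact Real.sqrt_le_sqrt (by nlinarith)
    have h2 : (1:ℝ) ≤ Real.sqrt (1+(R*(x-x₀))^2) := by
      nlinarith [Real.sq_sqrt (show (0:ℝ) ≤ 1+(R*(x-x₀))^2 by positivity),
        Real.sqrt_nonneg (1+(R*(x-x₀))^2)]
    calc |R*(x-x₀)| ≤ Real.sqrt (1+(R*(x-x₀))^2) := h1
      _ ≤ (Real.sqrt (1+(R*(x-x₀))^2))^(99:ℕ) := le_self_pow₀ h2 (by norm_num)
  have hsq : ∀ l : Filter ℝ,
      Tendsto (fun x : ℝ => (Real.sqrt (1+(R*(x-x₀))^2))^(99:ℕ)) l atTop →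
      Tendsto (fun x : ℝ => ∫ t in Set.Iic x, F t) l (nhds 0) := by
    intro l hl
    apply squeeze_zero_norm key
    have := (hl.inv_tendsto_atTop).const_mul (π * Λ * R⁻¹)
    simpa using this
  have htop : Tendsto (fun x : ℝ => (Real.sqrt (1+(R*(x-x₀))^2))^(99:ℕ)) atTop atTop := by
    apply tendsto_atTop_mono (fun x => le_trans (le_abs_self _) (hpow x))
    have h1 : Tendsto (fun x : ℝ => x + (-x₀)) atTop atTop :=
      tendsto_atTop_add_const_right atTop (-x₀) tendsto_id
    have h2 := h1.const_mul_atTop hR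
    apply h2.congr
    intro x; ring
  have hbot : Tendsto (fun x : ℝ => (Real.sqrt (1+(R*(x-x₀))^2))^(99:ℕ)) atBot atTop := by
    apply tendsto_atTop_mono (fun x => le_trans (neg_le_abs _) (hpow x))
    have h1 : Tendsto (fun x : ℝ => x₀ + (-x)) atBot atTop :=
      tendsto_atTop_add_const_left atBot x₀ tendsto_neg_atBot_atTop
    have h2 := h1.const_mul_atTop hR
    apply h2.congr
    intro x; ring
  exact ⟨hsq atBot hbot, hsq atTop htop, keyC⟩
end

section
/- Let X be a Banach space and g ∈ L^∞(ℝ;X) ∩ L^{1,∞}-locally controlled in the following sense: for every interval K there is a constant a_K ∈ X with ‖1_K(g − a_K)‖_{L^{1,∞}(ℝ;X)} ≤ λ|K|. Then ‖g‖_{BMO(ℝ;X)} ≤ Cλ for an absolute constant C, where ‖g‖_{BMO} = sup_K inf_{c∈X} (1/|K|)∫_K |g − c|_X (suprema over all intervals K). (John–Strömberg inequality, vector-valued, d = 1.) -/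
open MeasureTheory Set ENNReal

namespace JS

noncomputable section

/-- left endpoint of the `k`-th dyadic subinterval at level `m`. -/
def pt (a h : ℝ) (m k : ℕ) : ℝ := a + h * k / 2 ^ m

/-- the dyadic interval indexed by `p = (m, k)`. -/
def dI (a h : ℝ) (p : ℕ × ℕ) : Set ℝ := Icc (pt a h p.1 p.2) (pt a h p.1 (p.2 + 1))

/-- dyadic containment: `q ⊆ p`. -/
def dsub (q p : ℕ × ℕ) : Prop :=
  p.1 ≤ q.1 ∧ p.2 * 2 ^ (q.1 - p.1) ≤ q.2 ∧ q.2 + 1 ≤ (p.2 + 1) * 2 ^ (q.1 - p.1)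

variable {a h : ℝ}

lemma pt_shift (a h : ℝ) (m k d : ℕ) : pt a h m k = pt a h (m + d) (k * 2 ^ d) := by
  unfold pt
  have : ((k * 2 ^ d : ℕ) : ℝ) = (k : ℝ) * 2 ^ d := by push_cast; ring
  rw [this, pow_add]
  field_simp

lemma pt_le_pt (hh : 0 ≤ h) {m k k' : ℕ} (hk : k ≤ k') : pt a h m k ≤ pt a h m k' := by
  unfold pt
  have : (k : ℝ) ≤ k' := by exact_mod_cast hk
  have h2 : (0:ℝ) < 2 ^ m := by positivity
  gcongr

lemma pt_lt_pt (hh : 0 < h) {m k k' : ℕ} (hk : k < k') : pt a h m k < pt a h m k' := by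
  unfold pt
  have : (k : ℝ) < k' := by exact_mod_cast hk
  have h2 : (0:ℝ) < 2 ^ m := by positivity
  have : h * k / 2 ^ m < h * k' / 2 ^ m := by
    apply div_lt_div_of_pos_right ?_ h2
    exact (mul_lt_mul_iff_right₀ hh).mpr this
  linarith

lemma pt_succ (a h : ℝ) (m k : ℕ) : pt a h m (k + 1) = pt a h m k + h / 2 ^ m := by
  unfold pt
  push_cast
  field_simp
  ring

lemma dsub_refl (p : ℕ × ℕ) : dsub p p := by
  refine ⟨le_rfl, ?_, ?_⟩ <;> simp

lemma dsub_trans {q r p : ℕ × ℕ} (h1 : dsub q r) (h2 : dsub r p) : dsub q p := by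
  obtain ⟨l1, a1, b1⟩ := h1
  obtain ⟨l2, a2, b2⟩ := h2
  refine ⟨le_trans l2 l1, ?_, ?_⟩
  · have hd : q.1 - p.1 = (r.1 - p.1) + (q.1 - r.1) := by omega
    rw [hd, pow_add, ← mul_assoc]
    calc p.2 * 2 ^ (r.1 - p.1) * 2 ^ (q.1 - r.1) ≤ r.2 * 2 ^ (q.1 - r.1) :=
          Nat.mul_le_mul_right _ a2
      _ ≤ q.2 := a1
  · have hd : q.1 - p.1 = (r.1 - p.1) + (q.1 - r.1) := by omega
    rw [hd, pow_add, ← mul_assoc]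
    calc q.2 + 1 ≤ (r.2 + 1) * 2 ^ (q.1 - r.1) := b1
      _ ≤ (p.2 + 1) * 2 ^ (r.1 - p.1) * 2 ^ (q.1 - r.1) :=
          Nat.mul_le_mul_right _ b2

lemma dsub_level_lt {q p : ℕ × ℕ} (hqp : dsub q p) (hne : q ≠ p) : p.1 < q.1 := by
  obtain ⟨l, a1, b1⟩ := hqp
  rcases lt_or_eq_of_le l with h' | h'
  · exact h'
  · exfalso; apply hne
    have : q.1 - p.1 = 0 := by omega
    rw [this] at a1 b1
    simp at a1 b1
    exact Prod.ext (h'.symm) (by omega)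

lemma dI_subset (hh : 0 ≤ h) {q p : ℕ × ℕ} (hqp : dsub q p) : dI a h q ⊆ dI a h p := by
  obtain ⟨l, a1, b1⟩ := hqp
  apply Icc_subset_Icc
  · have := pt_shift a h p.1 p.2 (q.1 - p.1)
    rw [show p.1 + (q.1 - p.1) = q.1 by omega] at this
    rw [this]
    exact pt_le_pt hh a1
  · have := pt_shift a h p.1 (p.2 + 1) (q.1 - p.1)
    rw [show p.1 + (q.1 - p.1) = q.1 by omega] at this
    rw [this]
    exact pt_le_pt hh b1

lemma vol_dI (hh : 0 ≤ h) (p : ℕ × ℕ) :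
    volume (dI a h p) = ENNReal.ofReal (h / 2 ^ p.1) := by
  rw [dI, Real.volume_Icc, pt_succ]
  congr 1
  ring

lemma vol_inter_eq_zero (hh : 0 ≤ h) {q p : ℕ × ℕ} (hl : p.1 ≤ q.1) (hnot : ¬ dsub q p) :
    volume (dI a h q ∩ dI a h p) = 0 := by
  rw [dI, dI, Icc_inter_Icc, Real.volume_Icc]
  have hcase : q.2 + 1 ≤ p.2 * 2 ^ (q.1 - p.1) ∨ (p.2 + 1) * 2 ^ (q.1 - p.1) ≤ q.2 := by
    by_contra hc
    push_neg at hc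
    exact hnot ⟨hl, by omega, by omega⟩
  have key : min (pt a h q.1 (q.2 + 1)) (pt a h p.1 (p.2 + 1)) ≤
      max (pt a h q.1 q.2) (pt a h p.1 p.2) := by
    rcases hcase with hc | hc
    · calc min _ _ ≤ pt a h q.1 (q.2 + 1) := min_le_left _ _
        _ ≤ pt a h q.1 (p.2 * 2 ^ (q.1 - p.1)) := pt_le_pt hh hc
        _ = pt a h p.1 p.2 := by
            have := pt_shift a h p.1 p.2 (q.1 - p.1)
            rw [show p.1 + (q.1 - p.1) = q.1 by omega] at this
            rw [this]
        _ ≤ max _ _ := le_max_right _ _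
    · calc min _ _ ≤ pt a h p.1 (p.2 + 1) := min_le_right _ _
        _ = pt a h q.1 ((p.2 + 1) * 2 ^ (q.1 - p.1)) := by
            have := pt_shift a h p.1 (p.2 + 1) (q.1 - p.1)
            rw [show p.1 + (q.1 - p.1) = q.1 by omega] at this
            rw [this]
        _ ≤ pt a h q.1 q.2 := pt_le_pt hh hc
        _ ≤ max _ _ := le_max_left _ _
  rw [ENNReal.ofReal_eq_zero]
  linarith [key]

lemma dsub_of_vol_ne (hh : 0 ≤ h) {q p : ℕ × ℕ} (hl : p.1 ≤ q.1)
    (hv : volume (dI a h q ∩ dI a h p) ≠ 0) : dsub q p := by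
  by_contra hc
  exact hv (vol_inter_eq_zero hh hl hc)

lemma dsub_of_mem_Ioo (hh : 0 ≤ h) {q p : ℕ × ℕ} (hl : p.1 ≤ q.1) {x : ℝ}
    (hq : x ∈ Ioo (pt a h q.1 q.2) (pt a h q.1 (q.2 + 1)))
    (hp : x ∈ Ioo (pt a h p.1 p.2) (pt a h p.1 (p.2 + 1))) : dsub q p := by
  apply dsub_of_vol_ne hh hl
  rw [dI, dI, Icc_inter_Icc, Real.volume_Icc]
  rw [ne_eq, ENNReal.ofReal_eq_zero, not_le]
  have h1 : max (pt a h q.1 q.2) (pt a h p.1 p.2) < x := max_lt hq.1 hp.1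
  have h2 : x < min (pt a h q.1 (q.2 + 1)) (pt a h p.1 (p.2 + 1)) := lt_min hq.2 hp.2
  linarith

section Analytic

variable {X : Type} [NormedAddCommGroup X]
variable (g : ℝ → X) (cF : ℕ × ℕ → X) (lam a h : ℝ)

/-- the "bad set" of `p` : points of `dI p` where `g` is far from the chosen constant. -/
def BadS (p : ℕ × ℕ) : Set ℝ := {x | x ∈ dI a h p ∧ 4 * lam < ‖g x - cF p‖}

lemma measurableSet_BadS (hg : StronglyMeasurable g) (p : ℕ × ℕ) :
    MeasurableSet (BadS g cF lam a h p) := by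
  have : BadS g cF lam a h p = dI a h p ∩ {x | 4 * lam < ‖g x - cF p‖} := by
    ext x
    simp only [BadS, Set.mem_setOf_eq, Set.mem_inter_iff]
  rw [this]
  exact (measurableSet_Icc).inter <|
    measurableSet_lt measurable_const ((hg.sub stronglyMeasurable_const).norm.measurable)

variable {g cF lam a h}

/-- weak type hypothesis, abbreviated. -/
def Hyp : Prop := ∀ p : ℕ × ℕ, ∀ t : ℝ, 0 < t →
  t * (volume {x | x ∈ dI a h p ∧ t < ‖g x - cF p‖}).toReal ≤ lam * (h / 2 ^ p.1)

lemma vol_BadS (hh : 0 < h) (hlam : 0 < lam) (Hw : Hyp (g := g) (cF := cF) (lam := lam) (a := a) (h := h)) (p : ℕ × ℕ) :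
    volume (BadS g cF lam a h p) ≤ ENNReal.ofReal (h / 2 ^ p.1 / 4) := by
  have hfin : volume (BadS g cF lam a h p) ≤ volume (dI a h p) :=
    measure_mono (fun x hx => hx.1)
  have hne : volume (BadS g cF lam a h p) ≠ ⊤ := by
    refine ne_top_of_le_ne_top ?_ hfin
    rw [vol_dI hh.le]; exact ENNReal.ofReal_ne_top
  have h4 : (0:ℝ) < 4 * lam := by linarith
  have := Hw p (4 * lam) h4
  have htr : (volume (BadS g cF lam a h p)).toReal ≤ h / 2 ^ p.1 / 4 := by
    rw [show BadS g cF lam a h p = {x | x ∈ dI a h p ∧ 4 * lam < ‖g x - cF p‖} from rfl]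
    nlinarith [this, ENNReal.toReal_nonneg (a := volume {x | x ∈ dI a h p ∧ 4 * lam < ‖g x - cF p‖})]
  calc volume (BadS g cF lam a h p) = ENNReal.ofReal ((volume (BadS g cF lam a h p)).toReal) :=
        (ENNReal.ofReal_toReal hne).symm
    _ ≤ ENNReal.ofReal (h / 2 ^ p.1 / 4) := ENNReal.ofReal_le_ofReal htr

/-- a point good for both constants gives the basic comparison. -/
lemma good_pair (hh : 0 < h) (hlam : 0 < lam)
    (Hw : Hyp (g := g) (cF := cF) (lam := lam) (a := a) (h := h))
    {q p : ℕ × ℕ} (hqp : dsub q p)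
    (hb : 2 * volume (dI a h q ∩ BadS g cF lam a h p) ≤ volume (dI a h q)) :
    ‖cF q - cF p‖ ≤ 8 * lam := by
  set ℓ : ℝ := h / 2 ^ q.1 with hℓdef
  have hℓ : 0 < ℓ := by positivity
  have hS1 : volume (BadS g cF lam a h q) ≤ ENNReal.ofReal (ℓ / 4) :=
    vol_BadS hh hlam Hw q
  have hS2 : volume (dI a h q ∩ BadS g cF lam a h p) ≤ ENNReal.ofReal (ℓ / 2) := by
    by_contra hc
    push_neg at hc
    have h2 : (2:ℝ≥0∞) * ENNReal.ofReal (ℓ / 2) = ENNReal.ofReal ℓ := by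
      rw [← ENNReal.ofReal_ofNat 2, ← ENNReal.ofReal_mul (by norm_num)]
      congr 1; ring
    have : 2 * ENNReal.ofReal (ℓ / 2) < 2 * volume (dI a h q ∩ BadS g cF lam a h p) :=
      ENNReal.mul_lt_mul_iff_right (by norm_num) (by norm_num) |>.mpr hc
    rw [h2] at this
    have hlt := lt_of_lt_of_le this hb
    rw [vol_dI hh.le] at hlt
    exact absurd hlt (lt_irrefl _)
  have hunion : volume (BadS g cF lam a h q ∪ dI a h q ∩ BadS g cF lam a h p) <
      volume (dI a h q) := by
    calc volume (BadS g cF lam a h q ∪ dI a h q ∩ BadS g cF lam a h p)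
        ≤ volume (BadS g cF lam a h q) + volume (dI a h q ∩ BadS g cF lam a h p) :=
          measure_union_le _ _
      _ ≤ ENNReal.ofReal (ℓ / 4) + ENNReal.ofReal (ℓ / 2) := add_le_add hS1 hS2
      _ = ENNReal.ofReal (3 * ℓ / 4) := by
          rw [← ENNReal.ofReal_add (by positivity) (by positivity)]
          congr 1; ring
      _ < ENNReal.ofReal ℓ := by
          apply ENNReal.ofReal_lt_ofReal_iff hℓ |>.mpr
          linarith
      _ = volume (dI a h q) := (vol_dI hh.le q).symm
  have hx : ∃ x, x ∈ dI a h q ∧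
      x ∉ BadS g cF lam a h q ∪ dI a h q ∩ BadS g cF lam a h p := by
    by_contra hc
    push_neg at hc
    have hsub : dI a h q ⊆ BadS g cF lam a h q ∪ dI a h q ∩ BadS g cF lam a h p :=
      fun x hx => hc x hx
    exact absurd (measure_mono hsub) (not_le.mpr hunion)
  obtain ⟨x, hxI, hxn⟩ := hx
  rw [Set.mem_union, not_or] at hxn
  obtain ⟨hx1, hx2⟩ := hxn
  have hn1 : ‖g x - cF q‖ ≤ 4 * lam := by
    by_contra hc; push_neg at hc
    exact hx1 ⟨hxI, hc⟩
  have hn2 : ‖g x - cF p‖ ≤ 4 * lam := by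
    by_contra hc; push_neg at hc
    exact hx2 ⟨hxI, dI_subset hh.le hqp hxI, hc⟩
  calc ‖cF q - cF p‖ = ‖(g x - cF p) - (g x - cF q)‖ := by congr 1; abel
    _ ≤ ‖g x - cF p‖ + ‖g x - cF q‖ := norm_sub_le _ _
    _ ≤ 8 * lam := by linarith

variable (g cF lam a h)

/-- selected (maximal) dyadic subintervals of `p` where the bad set has density `> 1/2`. -/
def sel (p : ℕ × ℕ) : Set (ℕ × ℕ) :=
  {q | dsub q p ∧ q ≠ p ∧
    volume (dI a h q) < 2 * volume (dI a h q ∩ BadS g cF lam a h p) ∧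
    ∀ r, dsub q r → dsub r p → r ≠ q → r ≠ p →
      2 * volume (dI a h r ∩ BadS g cF lam a h p) ≤ volume (dI a h r)}

variable {g cF lam a h}

lemma two_ofReal_half (L : ℝ) : (2:ℝ≥0∞) * ENNReal.ofReal (L / 2) = ENNReal.ofReal L := by
  rw [← ENNReal.ofReal_ofNat 2, ← ENNReal.ofReal_mul (by norm_num)]
  congr 1; ring

lemma two_ofReal_quarter (L : ℝ) : (2:ℝ≥0∞) * ENNReal.ofReal (L / 4) = ENNReal.ofReal (L / 2) := by
  rw [← ENNReal.ofReal_ofNat 2, ← ENNReal.ofReal_mul (by norm_num)]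
  congr 1; ring

lemma sel_norm (hh : 0 < h) (hlam : 0 < lam)
    (Hw : Hyp (g := g) (cF := cF) (lam := lam) (a := a) (h := h))
    {q p : ℕ × ℕ} (hq : q ∈ sel g cF lam a h p) : ‖cF q - cF p‖ ≤ 16 * lam := by
  obtain ⟨hq1, hq2, hq3, hq4⟩ := hq
  have hm : p.1 < q.1 := dsub_level_lt hq1 hq2
  set q' : ℕ × ℕ := (q.1 - 1, q.2 / 2) with hq'def
  have hq'1 : q'.1 = q.1 - 1 := rfl
  have hqq' : dsub q q' := by
    refine ⟨by omega, ?_, ?_⟩ <;>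
    · have h1 : q.1 - (q.1 - 1) = 1 := by omega
      simp only [hq'def]
      rw [h1, pow_one]
      omega
  have hvolq : (0:ℝ≥0∞) < volume (dI a h q) := by
    rw [vol_dI hh.le]
    exact ENNReal.ofReal_pos.mpr (by positivity)
  have hq'p : dsub q' p := by
    apply dsub_of_vol_ne hh.le (by rw [hq'1]; omega)
    intro hz
    have hsub : dI a h q ⊆ dI a h q' ∩ dI a h p :=
      Set.subset_inter (dI_subset hh.le hqq') (dI_subset hh.le hq1)
    have hmono : volume (dI a h q) ≤ volume (dI a h q' ∩ dI a h p) := measure_mono hsub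
    rw [hz] at hmono
    exact absurd (le_antisymm hmono zero_le) (ne_of_gt hvolq)
  have hpow : (2:ℝ) ^ q.1 = 2 ^ (q.1 - 1) * 2 := by
    rw [← pow_succ]; congr 1; omega
  have step1 : ‖cF q - cF q'‖ ≤ 8 * lam := by
    apply good_pair hh hlam Hw hqq'
    calc 2 * volume (dI a h q ∩ BadS g cF lam a h q')
        ≤ 2 * volume (BadS g cF lam a h q') := by
          gcongr; exact Set.inter_subset_right
      _ ≤ 2 * ENNReal.ofReal (h / 2 ^ q'.1 / 4) := by gcongr; exact vol_BadS hh hlam Hw q'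
      _ = ENNReal.ofReal (h / 2 ^ q'.1 / 2) := two_ofReal_quarter _
      _ = volume (dI a h q) := by
          rw [vol_dI hh.le]
          congr 1
          rw [hq'1, hpow]
          field_simp
  have step2 : ‖cF q' - cF p‖ ≤ 8 * lam := by
    by_cases hq'peq : q' = p
    · rw [hq'peq, sub_self, norm_zero]; positivity
    · apply good_pair hh hlam Hw hq'p
      apply hq4 q' hqq' hq'p ?_ hq'peq
      intro heq
      have := congrArg Prod.fst heq
      rw [hq'1] at this
      omega
  calc ‖cF q - cF p‖ = ‖(cF q - cF q') + (cF q' - cF p)‖ := by congr 1; abel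
    _ ≤ ‖cF q - cF q'‖ + ‖cF q' - cF p‖ := norm_add_le _ _
    _ ≤ 16 * lam := by linarith

lemma sel_not_dsub {q q' p : ℕ × ℕ} (hq : q ∈ sel g cF lam a h p)
    (hq' : q' ∈ sel g cF lam a h p) (hne : q ≠ q') : ¬ dsub q q' := by
  intro hd
  obtain ⟨hq1, hq2, hq3, hq4⟩ := hq
  obtain ⟨hq'1, hq'2, hq'3, hq'4⟩ := hq'
  exact absurd (hq4 q' hd hq'1 (Ne.symm hne) hq'2) (not_le.mpr hq'3)

lemma sel_vol_inter_zero (hh : 0 < h) {q q' p : ℕ × ℕ} (hq : q ∈ sel g cF lam a h p)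
    (hq' : q' ∈ sel g cF lam a h p) (hne : q ≠ q') :
    volume (dI a h q ∩ dI a h q') = 0 := by
  rcases le_total q'.1 q.1 with hl | hl
  · exact vol_inter_eq_zero hh.le hl (sel_not_dsub hq hq' hne)
  · rw [Set.inter_comm]
    exact vol_inter_eq_zero hh.le hl (sel_not_dsub hq' hq (Ne.symm hne))

lemma sel_vol (hh : 0 < h) (hlam : 0 < lam) (hg : StronglyMeasurable g)
    (Hw : Hyp (g := g) (cF := cF) (lam := lam) (a := a) (h := h)) (p : ℕ × ℕ) :
    ∑' q : (sel g cF lam a h p), volume (dI a h q) ≤ volume (dI a h p) / 2 := by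
  have hcnt : (sel g cF lam a h p).Countable := Set.to_countable _
  have hkey : ∑' q : (sel g cF lam a h p), volume (dI a h q ∩ BadS g cF lam a h p)
      = volume (⋃ q ∈ sel g cF lam a h p, dI a h q ∩ BadS g cF lam a h p) := by
    symm
    apply measure_biUnion₀ hcnt
    · intro q hq q' hq' hne
      apply measure_mono_null (t := dI a h q ∩ dI a h q')
      · intro x hx
        exact ⟨hx.1.1, hx.2.1⟩
      · exact sel_vol_inter_zero hh hq hq' hne
    · intro q hq
      exact ((measurableSet_Icc).inter (measurableSet_BadS g cF lam a h hg p)).nullMeasurableSet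
  calc ∑' q : (sel g cF lam a h p), volume (dI a h q)
      ≤ ∑' q : (sel g cF lam a h p), 2 * volume (dI a h q ∩ BadS g cF lam a h p) :=
        ENNReal.tsum_le_tsum (fun q => (q.2.2.2.1).le)
    _ = 2 * ∑' q : (sel g cF lam a h p), volume (dI a h q ∩ BadS g cF lam a h p) :=
        ENNReal.tsum_mul_left
    _ = 2 * volume (⋃ q ∈ sel g cF lam a h p, dI a h q ∩ BadS g cF lam a h p) := by rw [hkey]
    _ ≤ 2 * volume (BadS g cF lam a h p) := by
        gcongr
        exact Set.iUnion₂_subset (fun q hq => Set.inter_subset_right)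
    _ ≤ 2 * ENNReal.ofReal (h / 2 ^ p.1 / 4) := by gcongr; exact vol_BadS hh hlam Hw p
    _ = ENNReal.ofReal (h / 2 ^ p.1 / 2) := two_ofReal_quarter _
    _ = volume (dI a h p) / 2 := by
        rw [vol_dI hh.le, ENNReal.ofReal_div_of_pos (by norm_num), ENNReal.ofReal_ofNat]

lemma Bad_ae_cover (hh : 0 < h) (hg : StronglyMeasurable g) (p : ℕ × ℕ) :
    volume (BadS g cF lam a h p \ ⋃ q ∈ sel g cF lam a h p, dI a h q) = 0 := by
  classical
  set B := BadS g cF lam a h p with hBdef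
  have hB : MeasurableSet B := measurableSet_BadS g cF lam a h hg p
  set V := ⋃ q ∈ sel g cF lam a h p, dI a h q with hVdef
  set D : Set ℝ := Set.range (fun mk : ℕ × ℕ => pt a h mk.1 mk.2) with hDdef
  have hD : volume D = 0 := (Set.countable_range _).measure_zero _
  have dens := Besicovitch.ae_tendsto_measure_inter_div_of_measurableSet volume hB
  set P : ℝ → Prop := fun x => Filter.Tendsto
      (fun r => volume (B ∩ Metric.closedBall x r) / volume (Metric.closedBall x r))
      (nhdsWithin 0 (Set.Ioi 0)) (nhds (B.indicator 1 x)) with hPdef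
  have hT : volume {x | ¬ P x} = 0 := dens
  -- the main claim
  have main : ∀ x, x ∈ B → x ∉ D → P x → x ∈ V := by
    intro x hxB hxD hx
    have hxD' : ∀ m k : ℕ, x ≠ pt a h m k := by
      intro m k heq
      exact hxD ⟨(m, k), heq.symm⟩
    -- x is strictly inside dI p
    have hxl : pt a h p.1 p.2 < x := lt_of_le_of_ne hxB.1.1 (Ne.symm (hxD' _ _))
    have hxr : x < pt a h p.1 (p.2 + 1) := lt_of_le_of_ne hxB.1.2 (hxD' _ _)
    have hxa : a < x := by
      have : a ≤ pt a h p.1 p.2 := by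
        unfold pt
        have : (0:ℝ) ≤ h * p.2 / 2 ^ p.1 := by positivity
        linarith
      linarith
    -- the dyadic index of x at each level
    set kk : ℕ → ℕ := fun m => ⌊(x - a) * 2 ^ m / h⌋₊ with hkkdef
    have hfl : ∀ m : ℕ, pt a h m (kk m) < x ∧ x < pt a h m (kk m + 1) := by
      intro m
      have hxa' : (0:ℝ) < x - a := by linarith
      have h2m : (0:ℝ) < 2 ^ m := by positivity
      have hpos : (0:ℝ) ≤ (x - a) * 2 ^ m / h := by
        apply div_nonneg _ hh.le
        exact mul_nonneg hxa'.le (by positivity)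
      constructor
      · apply lt_of_le_of_ne _ (Ne.symm (hxD' _ _))
        have h1 : (kk m : ℝ) ≤ (x - a) * 2 ^ m / h := Nat.floor_le hpos
        unfold pt
        rw [le_div_iff₀ hh] at h1
        have h2 : h * (kk m) / 2 ^ m ≤ x - a := by
          rw [div_le_iff₀ h2m]
          nlinarith
        linarith
      · have h1 : (x - a) * 2 ^ m / h < (kk m : ℝ) + 1 := Nat.lt_floor_add_one _
        unfold pt
        rw [div_lt_iff₀ hh] at h1
        have h2 : x - a < h * ((kk m : ℕ) + 1 : ℕ) / 2 ^ m := by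
          rw [lt_div_iff₀ h2m]
          push_cast
          nlinarith
        push_cast at h2 ⊢
        linarith
    have huniq : ∀ m j : ℕ, pt a h m j < x → x < pt a h m (j + 1) → j = kk m := by
      intro m j h1 h2
      have h2m : (0:ℝ) < 2 ^ m := by positivity
      unfold pt at h1 h2
      have hj1 : (j : ℝ) ≤ (x - a) * 2 ^ m / h := by
        rw [le_div_iff₀ hh]
        have h3 : h * j / 2 ^ m < x - a := by linarith
        rw [div_lt_iff₀ h2m] at h3
        nlinarith
      have hj2 : (x - a) * 2 ^ m / h < (j : ℝ) + 1 := by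
        rw [div_lt_iff₀ hh]
        have h3 : x - a < h * ((j:ℕ) + 1 : ℕ) / 2 ^ m := by push_cast; push_cast at h2; linarith
        rw [lt_div_iff₀ h2m] at h3
        push_cast at h3
        nlinarith
      have h5 : j ≤ kk m := Nat.le_floor hj1
      have h4 : kk m < j + 1 := by
        have hnn : (0:ℝ) ≤ (x - a) * 2 ^ m / h :=
          div_nonneg (mul_nonneg (by linarith) (by positivity)) hh.le
        show ⌊(x - a) * 2 ^ m / h⌋₊ < j + 1
        apply (Nat.floor_lt hnn).mpr
        push_cast
        exact hj2
      omega
    -- density of B in small dyadic intervals around x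
    have hx1 : Filter.Tendsto
        (fun r => volume (B ∩ Metric.closedBall x r) / volume (Metric.closedBall x r))
        (nhdsWithin 0 (Set.Ioi 0)) (nhds 1) := by
      have : B.indicator (1 : ℝ → ℝ≥0∞) x = 1 := by
        rw [Set.indicator_of_mem hxB]; rfl
      rw [hPdef] at hx
      rwa [this] at hx
    have hev : ∀ᶠ r in nhdsWithin 0 (Set.Ioi 0),
        ENNReal.ofReal (7/8) < volume (B ∩ Metric.closedBall x r) / volume (Metric.closedBall x r) :=
      hx1.eventually (eventually_gt_nhds (ENNReal.ofReal_lt_one.mpr (by norm_num)))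
    obtain ⟨ε, hε, hsubε⟩ := mem_nhdsGT_iff_exists_Ioc_subset.mp hev
    have hεpos : (0:ℝ) < ε := hε
    -- a good level
    obtain ⟨N, hN⟩ := pow_unbounded_of_one_lt (R := ℝ) (h / ε) one_lt_two
    set m : ℕ := max N (p.1 + 1) with hmdef
    have hm1 : p.1 < m := lt_of_lt_of_le (Nat.lt_succ_self _) (le_max_right _ _)
    have hle : h / 2 ^ m ≤ ε := by
      have h2 : (2:ℝ) ^ N ≤ 2 ^ m := by
        apply pow_le_pow_right₀ (by norm_num) (le_max_left _ _)
      have hN' : h / ε < 2 ^ m := lt_of_lt_of_le hN h2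
      rw [div_le_iff₀ (by positivity)]
      rw [div_lt_iff₀ hεpos] at hN'
      nlinarith
    -- the density condition holds at level m
    set Q : ℕ → Prop := fun m' => p.1 < m' ∧
        volume (dI a h (m', kk m')) < 2 * volume (dI a h (m', kk m') ∩ B) with hQdef
    have hQm : Q m := by
      refine ⟨hm1, ?_⟩
      set ℓ : ℝ := h / 2 ^ m with hℓdef
      have hℓpos : 0 < ℓ := by positivity
      have hIcb : dI a h (m, kk m) ⊆ Metric.closedBall x ℓ := by
        rw [Real.closedBall_eq_Icc]
        unfold dI
        simp only
        rw [pt_succ]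
        apply Set.Icc_subset_Icc
        · have := (hfl m).2
          rw [pt_succ] at this
          linarith
        · have := (hfl m).1
          linarith
      by_contra hc
      push_neg at hc
      have hvI : volume (dI a h (m, kk m)) = ENNReal.ofReal ℓ := vol_dI hh.le _
      have hfin : volume (dI a h (m, kk m)) ≠ ⊤ := by rw [hvI]; exact ENNReal.ofReal_ne_top
      have hrat := hsubε ⟨hℓpos, hle⟩
      simp only [Set.mem_setOf_eq] at hrat
      have hcb : volume (Metric.closedBall x ℓ) = ENNReal.ofReal (2 * ℓ) :=
        Real.volume_closedBall _ _
      have hlt : ENNReal.ofReal (7/8) * ENNReal.ofReal (2 * ℓ) < volume (B ∩ Metric.closedBall x ℓ) := by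
        rw [← hcb]
        exact (ENNReal.lt_div_iff_mul_lt (Or.inl (by rw [hcb]; simp [hℓpos.le]; positivity))
          (Or.inl (by rw [hcb]; exact ENNReal.ofReal_ne_top))).mp hrat
      have hsplit : volume (B ∩ Metric.closedBall x ℓ) ≤
          volume (dI a h (m, kk m) ∩ B) + volume (Metric.closedBall x ℓ \ dI a h (m, kk m)) := by
        apply le_trans (measure_mono ?_) (measure_union_le _ _)
        intro y hy
        by_cases hyI : y ∈ dI a h (m, kk m)
        · exact Or.inl ⟨hyI, hy.1⟩
        · exact Or.inr ⟨hy.2, hyI⟩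
      have hdiff : volume (Metric.closedBall x ℓ \ dI a h (m, kk m)) = ENNReal.ofReal ℓ := by
        rw [measure_diff hIcb (measurableSet_Icc).nullMeasurableSet hfin, hcb, hvI,
          ← ENNReal.ofReal_sub _ hℓpos.le]
        congr 1; ring
      have hhalf : volume (dI a h (m, kk m) ∩ B) ≤ ENNReal.ofReal (ℓ / 2) := by
        have h2 : 2 * volume (dI a h (m, kk m) ∩ B) ≤ ENNReal.ofReal ℓ := by
          rw [← hvI]; exact hc
        by_contra hcc
        push_neg at hcc
        have h3 := ENNReal.mul_lt_mul_iff_right (a := 2) (by norm_num) (by norm_num) |>.mpr hcc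
        rw [two_ofReal_half] at h3
        exact absurd (lt_of_lt_of_le h3 h2) (lt_irrefl _)
      have hfinal : ENNReal.ofReal (7 * ℓ / 4) < ENNReal.ofReal (3 * ℓ / 2) := by
        calc ENNReal.ofReal (7 * ℓ / 4) = ENNReal.ofReal (7/8) * ENNReal.ofReal (2 * ℓ) := by
              rw [← ENNReal.ofReal_mul (by norm_num)]; congr 1; ring
          _ < volume (B ∩ Metric.closedBall x ℓ) := hlt
          _ ≤ ENNReal.ofReal (ℓ / 2) + ENNReal.ofReal ℓ := by
              refine le_trans hsplit (add_le_add hhalf ?_)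
              rw [hdiff]
          _ = ENNReal.ofReal (3 * ℓ / 2) := by
              rw [← ENNReal.ofReal_add (by positivity) (by positivity)]
              congr 1; ring
      rw [ENNReal.ofReal_lt_ofReal_iff (by positivity)] at hfinal
      nlinarith
    -- the minimal level with the density condition
    have hexQ : ∃ m', Q m' := ⟨m, hQm⟩
    set m' : ℕ := Nat.find hexQ with hm'def
    have hQm' : Q m' := Nat.find_spec hexQ
    set qs : ℕ × ℕ := (m', kk m') with hqsdef
    have hxqs : x ∈ dI a h qs := ⟨(hfl m').1.le, (hfl m').2.le⟩
    have hdqs : dsub qs p := by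
      apply dsub_of_mem_Ioo hh.le (le_of_lt hQm'.1)
      · exact ⟨(hfl m').1, (hfl m').2⟩
      · exact ⟨hxl, hxr⟩
    have hqsne : qs ≠ p := by
      intro heq
      have := congrArg Prod.fst heq
      simp only [hqsdef] at this
      have := hQm'.1
      omega
    have hqssel : qs ∈ sel g cF lam a h p := by
      refine ⟨hdqs, hqsne, hQm'.2, ?_⟩
      intro r hqr hrp hrq hrp2
      have hr1 : p.1 < r.1 := dsub_level_lt hrp hrp2
      have hr2 : r.1 < m' := by
        have := dsub_level_lt hqr (Ne.symm hrq)
        simpa [hqsdef] using this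
      have hxr' : x ∈ dI a h r := dI_subset hh.le hqr hxqs
      have hrl : pt a h r.1 r.2 < x := lt_of_le_of_ne hxr'.1 (Ne.symm (hxD' _ _))
      have hrr : x < pt a h r.1 (r.2 + 1) := lt_of_le_of_ne hxr'.2 (hxD' _ _)
      have hridx : r.2 = kk r.1 := huniq r.1 r.2 hrl hrr
      have hnQ : ¬ Q r.1 := Nat.find_min hexQ hr2
      have hnQ' : ¬ (p.1 < r.1 ∧
          volume (dI a h (r.1, kk r.1)) < 2 * volume (dI a h (r.1, kk r.1) ∩ B)) := hnQ
      push_neg at hnQ'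
      have hreq : r = (r.1, kk r.1) := Prod.ext rfl hridx
      rw [← hBdef, hreq]
      exact hnQ' hr1
    rw [hVdef]
    exact Set.mem_biUnion hqssel hxqs
  -- assemble
  apply measure_mono_null (t := D ∪ {x | ¬ P x})
  · intro x hx
    rcases hx with ⟨hxB, hxV⟩
    by_cases hxD : x ∈ D
    · exact Or.inl hxD
    · by_cases hxP : P x
      · exact absurd (main x hxB hxD hxP) hxV
      · exact Or.inr hxP
  · exact measure_union_null hD hT

variable (g cF lam a h)

/-- the generations of the Calderón–Zygmund / John–Strömberg decomposition. -/
def Gen : ℕ → Set (ℕ × ℕ)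
  | 0 => {(0, 0)}
  | n + 1 => ⋃ p ∈ Gen n, sel g cF lam a h p

variable {g cF lam a h}

lemma Gen_dsub {n : ℕ} {q : ℕ × ℕ} (hq : q ∈ Gen g cF lam a h n) : dsub q (0, 0) := by
  induction n generalizing q with
  | zero => simp only [Gen, Set.mem_singleton_iff] at hq; rw [hq]; exact dsub_refl _
  | succ n ih =>
    simp only [Gen, Set.mem_iUnion] at hq
    obtain ⟨p, hp, hqp⟩ := hq
    exact dsub_trans hqp.1 (ih hp)

lemma Gen_norm (hh : 0 < h) (hlam : 0 < lam)
    (Hw : Hyp (g := g) (cF := cF) (lam := lam) (a := a) (h := h))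
    {n : ℕ} {q : ℕ × ℕ} (hq : q ∈ Gen g cF lam a h n) :
    ‖cF q - cF (0, 0)‖ ≤ 16 * lam * n := by
  induction n generalizing q with
  | zero => simp only [Gen, Set.mem_singleton_iff] at hq; rw [hq]; simp
  | succ n ih =>
    simp only [Gen, Set.mem_iUnion] at hq
    obtain ⟨p, hp, hqp⟩ := hq
    have h1 := sel_norm hh hlam Hw hqp
    have h2 := ih hp
    calc ‖cF q - cF (0, 0)‖ = ‖(cF q - cF p) + (cF p - cF (0, 0))‖ := by congr 1; abel
      _ ≤ ‖cF q - cF p‖ + ‖cF p - cF (0, 0)‖ := norm_add_le _ _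
      _ ≤ 16 * lam * (n + 1 : ℕ) := by push_cast; linarith

lemma Gen_sum (hh : 0 < h) (hlam : 0 < lam) (hg : StronglyMeasurable g)
    (Hw : Hyp (g := g) (cF := cF) (lam := lam) (a := a) (h := h)) (n : ℕ) :
    ∑' q : (Gen g cF lam a h n), volume (dI a h q)
      ≤ volume (dI a h (0, 0)) * 2⁻¹ ^ n := by
  induction n with
  | zero =>
    have h0 : Gen g cF lam a h 0 = ({((0:ℕ),(0:ℕ))} : Set (ℕ × ℕ)) := rfl
    rw [h0]
    rw [tsum_singleton ((0:ℕ),(0:ℕ)) (fun q => volume (dI a h q))]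
    simp
  | succ n ih =>
    have h0 : Gen g cF lam a h (n+1) = ⋃ p ∈ Gen g cF lam a h n, sel g cF lam a h p := rfl
    rw [h0]
    calc ∑' q : (⋃ p ∈ Gen g cF lam a h n, sel g cF lam a h p), volume (dI a h q)
        ≤ ∑' p : (Gen g cF lam a h n), ∑' q : (sel g cF lam a h (p : ℕ × ℕ)), volume (dI a h q) :=
          ENNReal.tsum_biUnion_le_tsum (fun q => volume (dI a h q)) (Gen g cF lam a h n)
            (fun p => sel g cF lam a h p)
      _ ≤ ∑' p : (Gen g cF lam a h n), volume (dI a h (p : ℕ × ℕ)) * 2⁻¹ := by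
          apply ENNReal.tsum_le_tsum
          intro p
          have := sel_vol hh hlam hg Hw (p : ℕ × ℕ)
          rwa [div_eq_mul_inv] at this
      _ = (∑' p : (Gen g cF lam a h n), volume (dI a h (p : ℕ × ℕ))) * 2⁻¹ :=
          ENNReal.tsum_mul_right
      _ ≤ (volume (dI a h (0, 0)) * 2⁻¹ ^ n) * 2⁻¹ := by gcongr
      _ = volume (dI a h (0, 0)) * 2⁻¹ ^ (n + 1) := by rw [mul_assoc, ← pow_succ]

lemma growth_bound (n : ℕ) : (4 + 16 * n : ℝ) ≤ 40 * (3/2) ^ n := by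
  induction n with
  | zero => norm_num
  | succ n ih =>
    have h1 : (1:ℝ) ≤ (3/2) ^ n := one_le_pow₀ (by norm_num)
    have h2 : (40:ℝ) * (3/2) ^ (n+1) = 40 * (3/2)^n + 20 * (3/2)^n := by ring
    push_cast
    push_cast at ih
    nlinarith

lemma main_estimate (hh : 0 < h) (hlam : 0 < lam) (hg : StronglyMeasurable g)
    (Hw : Hyp (g := g) (cF := cF) (lam := lam) (a := a) (h := h)) :
    ∫⁻ x in dI a h (0, 0), ENNReal.ofReal ‖g x - cF (0, 0)‖
      ≤ ENNReal.ofReal (160 * lam * h) := by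
  classical
  set U : ℕ → Set ℝ := fun n => ⋃ q ∈ Gen g cF lam a h n, dI a h q with hUdef
  have hUmeas : ∀ n, MeasurableSet (U n) := by
    intro n
    exact MeasurableSet.biUnion (Set.to_countable _) (fun q _ => measurableSet_Icc)
  have hUvol : ∀ n, volume (U n) ≤ ENNReal.ofReal h * 2⁻¹ ^ n := by
    intro n
    calc volume (U n) ≤ ∑' q : (Gen g cF lam a h n), volume (dI a h q) :=
          measure_biUnion_le volume (Set.to_countable _) _
      _ ≤ volume (dI a h (0, 0)) * 2⁻¹ ^ n := Gen_sum hh hlam hg Hw n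
      _ = ENNReal.ofReal h * 2⁻¹ ^ n := by rw [vol_dI hh.le]; norm_num
  have hU0 : dI a h (0, 0) ⊆ U 0 := by
    intro x hx
    have : (0, 0) ∈ Gen g cF lam a h 0 := rfl
    exact Set.mem_biUnion this hx
  have hUdec : ∀ n, U (n + 1) ⊆ U n := by
    intro n x hx
    simp only [hUdef, Set.mem_iUnion] at hx ⊢
    obtain ⟨q, hq, hxq⟩ := hx
    have h0 : Gen g cF lam a h (n+1) = ⋃ p ∈ Gen g cF lam a h n, sel g cF lam a h p := rfl
    rw [h0] at hq
    simp only [Set.mem_iUnion] at hq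
    obtain ⟨p, hp, hqp⟩ := hq
    exact ⟨p, hp, dI_subset hh.le hqp.1 hxq⟩
  have hInter : volume (⋂ n, U n) = 0 := by
    refine le_antisymm ?_ zero_le
    have htend : Filter.Tendsto (fun n : ℕ => ENNReal.ofReal h * 2⁻¹ ^ n)
        Filter.atTop (nhds 0) := by
      have h1 : Filter.Tendsto (fun n : ℕ => (2⁻¹ : ℝ≥0∞) ^ n) Filter.atTop (nhds 0) :=
        ENNReal.tendsto_pow_atTop_nhds_zero_of_lt_one (ENNReal.inv_lt_one.mpr ENNReal.one_lt_two)
      have h2 : Filter.Tendsto (fun n : ℕ => ENNReal.ofReal h * 2⁻¹ ^ n)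
          Filter.atTop (nhds (ENNReal.ofReal h * 0)) :=
        ENNReal.Tendsto.const_mul h1 (Or.inr ENNReal.ofReal_ne_top)
      simpa using h2
    apply ge_of_tendsto' htend
    intro n
    exact le_trans (measure_mono (Set.iInter_subset _ n)) (hUvol n)
  set E : Set ℝ := ⋃ n, ⋃ p ∈ Gen g cF lam a h n,
      (BadS g cF lam a h p \ ⋃ q ∈ sel g cF lam a h p, dI a h q) with hEdef
  have hE : volume E = 0 := by
    apply measure_iUnion_null
    intro n
    rw [measure_biUnion_null_iff (Set.to_countable _)]
    intro p _
    exact Bad_ae_cover hh hg p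
  set W : ℕ → Set ℝ := fun n => (U n \ U (n + 1)) \ E with hWdef
  have hptwise : ∀ n, ∀ x ∈ W n, ‖g x - cF (0, 0)‖ ≤ 4 * lam + 16 * lam * n := by
    intro n x hx
    obtain ⟨⟨hxU, hxU1⟩, hxE⟩ := hx
    simp only [hUdef, Set.mem_iUnion] at hxU
    obtain ⟨p, hp, hxp⟩ := hxU
    have hxV : x ∉ ⋃ q ∈ sel g cF lam a h p, dI a h q := by
      intro hxV
      simp only [Set.mem_iUnion] at hxV
      obtain ⟨q, hq, hxq⟩ := hxV
      apply hxU1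
      simp only [hUdef, Set.mem_iUnion]
      refine ⟨q, ?_, hxq⟩
      have h0 : Gen g cF lam a h (n+1) = ⋃ p ∈ Gen g cF lam a h n, sel g cF lam a h p := rfl
      rw [h0]
      exact Set.mem_biUnion hp hq
    have hxB : x ∉ BadS g cF lam a h p := by
      intro hxB
      apply hxE
      rw [hEdef]
      refine Set.mem_iUnion.mpr ⟨n, ?_⟩
      exact Set.mem_biUnion hp ⟨hxB, hxV⟩
    have hn1 : ‖g x - cF p‖ ≤ 4 * lam := by
      by_contra hc
      push_neg at hc
      exact hxB ⟨hxp, hc⟩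
    have hn2 := Gen_norm hh hlam Hw hp
    calc ‖g x - cF (0, 0)‖ = ‖(g x - cF p) + (cF p - cF (0, 0))‖ := by congr 1; abel
      _ ≤ ‖g x - cF p‖ + ‖cF p - cF (0, 0)‖ := norm_add_le _ _
      _ ≤ 4 * lam + 16 * lam * n := by linarith
  have hcover : dI a h (0, 0) ⊆ (⋃ n, W n) ∪ ((⋂ n, U n) ∪ E) := by
    intro x hx
    by_cases hxE : x ∈ E
    · exact Or.inr (Or.inr hxE)
    by_cases hxI : x ∈ ⋂ n, U n
    · exact Or.inr (Or.inl hxI)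
    left
    have hex : ∃ n, x ∉ U n := by
      by_contra hc
      push_neg at hc
      exact hxI (Set.mem_iInter.mpr hc)
    have hn0 : Nat.find hex ≠ 0 := by
      intro h0
      exact (h0 ▸ Nat.find_spec hex) (hU0 hx)
    set n0 := Nat.find hex with hn0def
    have hxUn : x ∈ U (n0 - 1) := by
      by_contra hc
      exact absurd (Nat.find_min hex (m := n0 - 1) (by omega)) (by simp [hc])
    refine Set.mem_iUnion.mpr ⟨n0 - 1, ⟨⟨hxUn, ?_⟩, hxE⟩⟩
    rw [show n0 - 1 + 1 = n0 by omega]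
    exact Nat.find_spec hex
  have hterm : ∀ n, ∫⁻ x in W n, ENNReal.ofReal ‖g x - cF (0, 0)‖
      ≤ ENNReal.ofReal (40 * lam) * ENNReal.ofReal h * ENNReal.ofReal (3/4) ^ n := by
    intro n
    have hWU : W n ⊆ U n := fun x hx => hx.1.1
    calc ∫⁻ x in W n, ENNReal.ofReal ‖g x - cF (0, 0)‖
        ≤ ∫⁻ _ in W n, ENNReal.ofReal (4 * lam + 16 * lam * n) :=
          setLIntegral_mono measurable_const
            (fun x hx => ENNReal.ofReal_le_ofReal (hptwise n x hx))
      _ = ENNReal.ofReal (4 * lam + 16 * lam * n) * volume (W n) := setLIntegral_const _ _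
      _ ≤ ENNReal.ofReal (4 * lam + 16 * lam * n) * (ENNReal.ofReal h * 2⁻¹ ^ n) := by
          gcongr
          exact le_trans (measure_mono hWU) (hUvol n)
      _ ≤ (ENNReal.ofReal (40 * lam) * ENNReal.ofReal (3/2) ^ n) *
            (ENNReal.ofReal h * 2⁻¹ ^ n) := by
          gcongr
          rw [← ENNReal.ofReal_pow (by norm_num), ← ENNReal.ofReal_mul (by positivity)]
          apply ENNReal.ofReal_le_ofReal
          have := growth_bound n
          nlinarith [pow_nonneg (by norm_num : (0:ℝ) ≤ 3/2) n, hlam.le]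
      _ = ENNReal.ofReal (40 * lam) * ENNReal.ofReal h *
            (ENNReal.ofReal (3/2) * 2⁻¹) ^ n := by
          rw [mul_pow]; ring
      _ = ENNReal.ofReal (40 * lam) * ENNReal.ofReal h * ENNReal.ofReal (3/4) ^ n := by
          congr 2
          rw [show ((2:ℝ≥0∞))⁻¹ = ENNReal.ofReal 2⁻¹ by
              rw [ENNReal.ofReal_inv_of_pos (by norm_num)]; norm_num,
            ← ENNReal.ofReal_mul (by norm_num)]
          norm_num
  calc ∫⁻ x in dI a h (0, 0), ENNReal.ofReal ‖g x - cF (0, 0)‖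
      ≤ ∫⁻ x in (⋃ n, W n) ∪ ((⋂ n, U n) ∪ E), ENNReal.ofReal ‖g x - cF (0, 0)‖ :=
        lintegral_mono_set hcover
    _ ≤ (∫⁻ x in ⋃ n, W n, ENNReal.ofReal ‖g x - cF (0, 0)‖)
        + ∫⁻ x in (⋂ n, U n) ∪ E, ENNReal.ofReal ‖g x - cF (0, 0)‖ :=
        lintegral_union_le _ _ _
    _ ≤ (∑' n, ∫⁻ x in W n, ENNReal.ofReal ‖g x - cF (0, 0)‖) + 0 := by
        gcongr
        · exact lintegral_iUnion_le _ _
        · rw [setLIntegral_measure_zero]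
          exact measure_union_null hInter hE
    _ ≤ (∑' n : ℕ, ENNReal.ofReal (40 * lam) * ENNReal.ofReal h * ENNReal.ofReal (3/4) ^ n)
        + 0 := by
        gcongr
        exact hterm _
    _ = ENNReal.ofReal (40 * lam) * ENNReal.ofReal h * (1 - ENNReal.ofReal (3/4))⁻¹ := by
        rw [add_zero, ENNReal.tsum_mul_left, ENNReal.tsum_geometric, mul_assoc]
    _ = ENNReal.ofReal (160 * lam * h) := by
        rw [show (1:ℝ≥0∞) - ENNReal.ofReal (3/4) = ENNReal.ofReal (1/4) by
            rw [← ENNReal.ofReal_one, ← ENNReal.ofReal_sub _ (by norm_num)]; norm_num]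
        rw [← ENNReal.ofReal_inv_of_pos (by norm_num)]
        rw [← ENNReal.ofReal_mul (by positivity), ← ENNReal.ofReal_mul (by positivity)]
        congr 1
        norm_num
        ring

end Analytic

end

end JS

open MeasureTheory

/-- Vector-valued John–Strömberg inequality in dimension one: if for every interval `K`
there is a constant `a_K` with `‖1_K (g - a_K)‖_{L^{1,∞}} ≤ λ |K|`, then the `BMO` norm
of `g` is at most `C λ` for an absolute constant `C`. -/
theorem stmt19 :
    ∃ C : ℝ, 0 < C ∧
    ∀ (X : Type) [NormedAddCommGroup X] [NormedSpace ℝ X],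
    ∀ (g : ℝ → X) (lam : ℝ), 0 ≤ lam → MemLp g ⊤ volume →
      (∀ a b : ℝ, a < b → ∃ cK : X, ∀ t : ℝ, 0 < t →
        t * (volume {x : ℝ | x ∈ Set.Icc a b ∧ t < ‖g x - cK‖}).toReal ≤ lam * (b - a)) →
      ∀ a b : ℝ, a < b → ∃ c : X,
        (∫ x in Set.Icc a b, ‖g x - c‖) ≤ C * lam * (b - a) := by
  classical
  refine ⟨160, by norm_num, ?_⟩
  intro X _ _ g lam hlam hmem hc a b hab
  rcases eq_or_lt_of_le hlam with hlam0 | hlam0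
  · -- λ = 0 : g is a.e. equal to a constant on the interval
    obtain ⟨cK, hcK⟩ := hc a b hab
    have hzero : ∀ t : ℝ, 0 < t → volume {x : ℝ | x ∈ Set.Icc a b ∧ t < ‖g x - cK‖} = 0 := by
      intro t ht
      have h1 := hcK t ht
      rw [← hlam0] at h1
      have h2 : (volume {x : ℝ | x ∈ Set.Icc a b ∧ t < ‖g x - cK‖}).toReal = 0 := by
        have := ENNReal.toReal_nonneg
          (a := volume {x : ℝ | x ∈ Set.Icc a b ∧ t < ‖g x - cK‖})
        nlinarith
      have hfin : volume {x : ℝ | x ∈ Set.Icc a b ∧ t < ‖g x - cK‖} ≠ ⊤ := by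
        apply ne_top_of_le_ne_top _ (measure_mono (fun x hx => hx.1))
        rw [Real.volume_Icc]
        exact ENNReal.ofReal_ne_top
      rcases (ENNReal.toReal_eq_zero_iff _).mp h2 with h3 | h3
      · exact h3
      · exact absurd h3 hfin
    refine ⟨cK, ?_⟩
    have hae0 : ∀ᵐ x ∂(volume.restrict (Set.Icc a b)), ‖g x - cK‖ = 0 := by
      rw [ae_restrict_iff' measurableSet_Icc]
      rw [ae_iff]
      apply measure_mono_null
        (t := ⋃ n : ℕ, {x : ℝ | x ∈ Set.Icc a b ∧ 1 / (n + 1) < ‖g x - cK‖})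
      · intro x hx
        simp only [Set.mem_setOf_eq, not_forall] at hx
        obtain ⟨hxI, hxn⟩ := hx
        have hpos : 0 < ‖g x - cK‖ := lt_of_le_of_ne (norm_nonneg _) (Ne.symm hxn)
        obtain ⟨n, hn⟩ := exists_nat_one_div_lt hpos
        exact Set.mem_iUnion.mpr ⟨n, hxI, hn⟩
      · exact measure_iUnion_null (fun n => hzero _ (by positivity))
    have : ∫ x in Set.Icc a b, ‖g x - cK‖ = ∫ _ in Set.Icc a b, (0:ℝ) :=
      integral_congr_ae hae0
    rw [this, integral_zero, ← hlam0]
    norm_num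
  · -- main case λ > 0
    set h : ℝ := b - a with hhdef
    have hh : 0 < h := by simp [hhdef]; linarith
    obtain hgsm := hmem.aestronglyMeasurable
    set g₀ : ℝ → X := hgsm.mk g with hg₀def
    have hg₀ : StronglyMeasurable g₀ := hgsm.stronglyMeasurable_mk
    have haeg : g =ᵐ[volume] g₀ := hgsm.ae_eq_mk
    have hptlt : ∀ p : ℕ × ℕ, JS.pt a h p.1 p.2 < JS.pt a h p.1 (p.2 + 1) :=
      fun p => JS.pt_lt_pt hh (Nat.lt_succ_self _)
    set cF : ℕ × ℕ → X := fun p => (hc _ _ (hptlt p)).choose with hcFdef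
    have hdiffpt : ∀ p : ℕ × ℕ, JS.pt a h p.1 (p.2 + 1) - JS.pt a h p.1 p.2 = h / 2 ^ p.1 := by
      intro p
      rw [JS.pt_succ]
      ring
    have Hw : JS.Hyp (g := g₀) (cF := cF) (lam := lam) (a := a) (h := h) := by
      intro p t ht
      have hspec := (hc _ _ (hptlt p)).choose_spec t ht
      have hseteq : volume {x : ℝ | x ∈ JS.dI a h p ∧ t < ‖g₀ x - cF p‖}
          = volume {x : ℝ | x ∈ Set.Icc (JS.pt a h p.1 p.2) (JS.pt a h p.1 (p.2 + 1))
              ∧ t < ‖g x - cF p‖} := by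
        apply measure_congr
        filter_upwards [haeg] with x hx
        have : (x ∈ {x : ℝ | x ∈ JS.dI a h p ∧ t < ‖g₀ x - cF p‖})
            = (x ∈ {x : ℝ | x ∈ Set.Icc (JS.pt a h p.1 p.2) (JS.pt a h p.1 (p.2 + 1))
              ∧ t < ‖g x - cF p‖}) := by
          simp only [Set.mem_setOf_eq, hx]
          rfl
        exact this
      rw [hseteq]
      refine hspec.trans (le_of_eq ?_)
      rw [hdiffpt p]
    have hmain := JS.main_estimate hh hlam0 hg₀ Hw
    have hKeq : JS.dI a h (0, 0) = Set.Icc a b := by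
      unfold JS.dI JS.pt
      norm_num
      rw [hhdef]
      ring
    refine ⟨cF (0, 0), ?_⟩
    have heq1 : ∫ x in Set.Icc a b, ‖g x - cF (0, 0)‖
        = ∫ x in Set.Icc a b, ‖g₀ x - cF (0, 0)‖ := by
      apply integral_congr_ae
      apply ae_restrict_of_ae
      filter_upwards [haeg] with x hx
      rw [hx]
    have heq2 : ∫ x in Set.Icc a b, ‖g₀ x - cF (0, 0)‖
        = (∫⁻ x in Set.Icc a b, ENNReal.ofReal ‖g₀ x - cF (0, 0)‖).toReal := by
      apply integral_eq_lintegral_of_nonneg_ae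
      · exact Filter.Eventually.of_forall (fun x => norm_nonneg _)
      · exact ((hg₀.sub stronglyMeasurable_const).norm).aestronglyMeasurable
    rw [heq1, heq2]
    rw [hKeq] at hmain
    have := ENNReal.toReal_le_of_le_ofReal (by positivity) hmain
    calc (∫⁻ x in Set.Icc a b, ENNReal.ofReal ‖g₀ x - cF (0, 0)‖).toReal
        ≤ 160 * lam * h := this
      _ = 160 * lam * (b - a) := by rw [hhdef]
end
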